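/- Let (z_j)_{j≥0} be a strictly increasing sequence with z_0=0, z_1=1/2, z_j ↗ 1, set λ_j := z_{j+1} − z_j and s_j := (1 − 2^{-j})/λ_j, and assume inf_{j≥1} s_j > 1. Let T:[0,1)→[0,1) be defined by Tx = 2x on [0,1/2) and, for each j ≥ 1, by the decreasing affine bijection from Z_j := [z_j, z_{j+1}) onto [2^{-j}, 1). Let Y_j := [2^{-(j+1)}, 2^{-j}) for j ≥ 0, and let μ ≪ λ be a T-invariant probability measure whose density has a version constant on each Y_j. Then μ(Y_j) = μ(Y_{j+1}) + σ(j) for every j ≥ 0, where σ(j) := 2μ(Y_0) · 2^{-(j+1)} · Σ_{i>j} s_i^{-1}; consequently μ(Y_j) = Σ_{i≥j} σ(i) for every j ≥ 0. -/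

import Mathlib

open MeasureTheory Filter Set Topology
open scoped ENNReal

/-- First hitting time `φ_E` (values in `ℝ≥0∞`; `∞` if the orbit never hits `E`). -/
noncomputable def hitTime {X : Type*} (T : X → X) (E : Set X) (x : X) : ℝ≥0∞ :=
  sInf {t : ℝ≥0∞ | ∃ n : ℕ, 1 ≤ n ∧ T^[n] x ∈ E ∧ t = (n : ℝ≥0∞)}

/-- First hitting time, `ℕ`-valued (junk value `0` if the orbit never hits `E`). -/
noncomputable def hitN {X : Type*} (T : X → X) (E : Set X) (x : X) : ℕ :=
  sInf {n : ℕ | 1 ≤ n ∧ T^[n] x ∈ E}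

/-- First return map `T_Y`. -/
noncomputable def returnMap {X : Type*} (T : X → X) (Y : Set X) (x : X) : X :=
  T^[hitN T Y x] x

/-- Normalized restriction `μ_Y = μ(Y)⁻¹ μ(Y ∩ ·)`. -/
noncomputable def condMeas {X : Type*} [MeasurableSpace X] (μ : Measure X) (Y : Set X) :
    Measure X := (μ Y)⁻¹ • μ.restrict Y

/-- Convergence in distribution, at continuity points of the limit distribution function,
of `[0,∞]`-valued random variables `f k` on `(X, ν)` to a random variable `R` on `(Ω, P)`. -/
def TendstoInDistrib {X Ω : Type*} [MeasurableSpace X] [MeasurableSpace Ω]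
    (ν : Measure X) (f : ℕ → X → ℝ≥0∞) (P : Measure Ω) (R : Ω → ℝ≥0∞) : Prop :=
  ∀ t : ℝ, ContinuousAt (fun s : ℝ => (P {ω | R ω ≤ ENNReal.ofReal s}).toReal) t →
    Tendsto (fun k => (ν {x | f k x ≤ ENNReal.ofReal t}).toReal) atTop
      (𝓝 ((P {ω | R ω ≤ ENNReal.ofReal t}).toReal))

/-- `f k → ∞` in `ν`-measure. -/
def TendstoInfInMeasure {X : Type*} [MeasurableSpace X] (ν : Measure X)
    (f : ℕ → X → ℝ≥0∞) : Prop :=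
  ∀ N : ℕ, 1 ≤ N → Tendsto (fun k => ν {x | f k x ≤ (N : ℝ≥0∞)}) atTop (𝓝 0)

/-- Points of `Y` can only reach `E` via `E'`. -/
def OnlyReachVia {X : Type*} [MeasurableSpace X] (μ : Measure X) (T : X → X)
    (Y E E' : Set X) : Prop :=
  ∀ n : ℕ, ∀ᵐ x ∂μ.restrict Y, T^[n] x ∈ E → ∃ j ≤ n, T^[j] x ∈ E'

/-- The dyadic interval `Y_j = [2^{-(j+1)}, 2^{-j})`. -/
noncomputable def Yset (j : ℕ) : Set ℝ :=
  Set.Ico ((2 : ℝ) ^ (-(j : ℤ) - 1)) ((2 : ℝ) ^ (-(j : ℤ)))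

/-- The slope `s_j = (1 - 2^{-j})/(z_{j+1} - z_j)`. -/
noncomputable def slopeZ (z : ℕ → ℝ) (j : ℕ) : ℝ :=
  (1 - (2 : ℝ) ^ (-(j : ℤ))) / (z (j + 1) - z j)

/-- `σ(j) = 2 μ(Y_0) · 2^{-(j+1)} · Σ_{i>j} s_i^{-1}`. -/
noncomputable def sigmaY (z : ℕ → ℝ) (μ : MeasureTheory.Measure ℝ) (j : ℕ) : ℝ≥0∞ :=
  2 * μ (Yset 0) * ENNReal.ofReal ((2 : ℝ) ^ (-(j : ℤ) - 1)) *
    ∑' i : ℕ, if j < i then ENNReal.ofReal ((slopeZ z i)⁻¹) else 0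

/-- **The invariant measure of the piecewise affine example.**
For the piecewise affine map `T` built from `(z_j)` and any `T`-invariant probability
`μ ≪ λ` whose density is constant on each `Y_j = [2^{-(j+1)}, 2^{-j})`, one has
`μ(Y_j) = μ(Y_{j+1}) + σ(j)` for all `j`, and consequently `μ(Y_j) = Σ_{i ≥ j} σ(i)`. -/
theorem stmt14 (z : ℕ → ℝ) (hz : StrictMono z) (hz0 : z 0 = 0) (hz1 : z 1 = 1 / 2)
    (hzlt : ∀ j, z j < 1) (hzlim : Tendsto z atTop (𝓝 1))
    (hs : ∃ ρ : ℝ, 1 < ρ ∧ ∀ j : ℕ, 1 ≤ j → ρ ≤ slopeZ z j)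
    (T : ℝ → ℝ) (hT0 : ∀ x ∈ Set.Ico (0 : ℝ) (1 / 2), T x = 2 * x)
    (hTj : ∀ j : ℕ, 1 ≤ j → ∀ x ∈ Set.Ioo (z j) (z (j + 1)),
      T x = 1 - slopeZ z j * (x - z j))
    (hmaps : Set.MapsTo T (Set.Ico (0 : ℝ) 1) (Set.Ico (0 : ℝ) 1))
    (μ : Measure ℝ) [IsProbabilityMeasure μ] (hac : μ ≪ volume)
    (hsupp : μ (Set.Ico (0 : ℝ) 1)ᶜ = 0) (hinv : MeasurePreserving T μ μ)
    (η : ℕ → ℝ≥0∞)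
    (hdens : ∀ j : ℕ, ∀ s ⊆ Yset j, MeasurableSet s → μ s = η j * volume s) :
    (∀ j : ℕ, μ (Yset j) = μ (Yset (j + 1)) + sigmaY z μ j) ∧
      (∀ j : ℕ, μ (Yset j) = ∑' i : ℕ, if j ≤ i then sigmaY z μ i else 0) := by
  classical
  obtain ⟨ρ, hρ1, hρs⟩ := hs
  have hpow_pos : ∀ n : ℤ, (0:ℝ) < 2 ^ n := fun n => zpow_pos two_pos n
  have hgap : ∀ i : ℕ, 0 < z (i+1) - z i := fun i => sub_pos.2 (hz (Nat.lt_succ_self i))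
  have hspos : ∀ i : ℕ, 1 ≤ i → 0 < slopeZ z i := fun i hi =>
    lt_of_lt_of_le (lt_trans zero_lt_one hρ1) (hρs i hi)
  have hkey_s : ∀ i : ℕ, slopeZ z i * (z (i+1) - z i) = 1 - 2 ^ (-(i:ℤ)) :=
    fun i => div_mul_cancel₀ _ (ne_of_gt (hgap i))
  have hznn : ∀ i, 0 ≤ z i := fun i => hz0 ▸ hz.monotone (Nat.zero_le i)
  have hμpt : ∀ x : ℝ, μ {x} = 0 := fun x => hac (by simp)
  have hTmeas : Measurable T := hinv.measurable
  have hYmeas : ∀ j, MeasurableSet (Yset j) := fun j => measurableSet_Ico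
  have hY0eq : Yset 0 = Set.Ico (1/2 : ℝ) 1 := by
    unfold Yset; norm_num
  have hη0 : η 0 = 2 * μ (Yset 0) := by
    have hd := hdens 0 (Yset 0) subset_rfl (hYmeas 0)
    have hv : volume (Yset 0) = ENNReal.ofReal (1/2) := by
      rw [hY0eq, Real.volume_Ico]; norm_num
    rw [hd, hv, mul_left_comm]
    have h2 : (2:ℝ≥0∞) * ENNReal.ofReal (1/2) = 1 := by
      rw [← ENNReal.ofReal_ofNat 2, ← ENNReal.ofReal_mul (by norm_num)]
      norm_num
    rw [h2, mul_one]
  -- main recurrence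
  have key : ∀ j : ℕ, μ (Yset j) = μ (Yset (j+1)) + sigmaY z μ j := by
    intro j
    have hple1 : (2:ℝ)^(-(j:ℤ)) ≤ 1 := by
      calc (2:ℝ)^(-(j:ℤ)) ≤ 2^(0:ℤ) := zpow_le_zpow_right₀ one_le_two (by omega)
        _ = 1 := zpow_zero 2
    have e1 : (2:ℝ)^(-(j:ℤ)) = 2^(-(j:ℤ)-1) * 2 := by
      have h := zpow_add_one₀ (two_ne_zero (α := ℝ)) (-(j:ℤ)-1)
      rw [show (-(j:ℤ)-1)+1 = -(j:ℤ) by ring] at h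
      linarith
    have e2 : (2:ℝ)^(-(j:ℤ)-1) = 2^(-(j:ℤ)-2) * 2 := by
      have h := zpow_add_one₀ (two_ne_zero (α := ℝ)) (-(j:ℤ)-2)
      rw [show (-(j:ℤ)-2)+1 = -(j:ℤ)-1 by ring] at h
      linarith
    set S : Set ℝ := T ⁻¹' Yset j with hS
    have hSmeas : MeasurableSet S := hTmeas (hYmeas j)
    have h1 : μ (Yset j) = μ S := (hinv.measure_preimage (hYmeas j).nullMeasurableSet).symm
    set B : ℕ → Set ℝ := fun i => Set.Ico (z i) (z (i+1)) with hB
    have hBmeas : ∀ i, MeasurableSet (B i) := fun i => measurableSet_Ico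
    have hBd : ∀ i k : ℕ, i < k → Disjoint (B i) (B k) := by
      intro i k hik
      rw [hB, Set.Ico_disjoint_Ico]
      exact le_trans (min_le_left _ _) (le_trans (hz.monotone hik) (le_max_right _ _))
    have hBdisj : Pairwise (Function.onFun Disjoint fun i => S ∩ B i) := by
      intro i k h
      rcases h.lt_or_gt with h' | h'
      · exact ((hBd i k h').mono Set.inter_subset_right Set.inter_subset_right)
      · exact ((hBd k i h').mono Set.inter_subset_right Set.inter_subset_right).symm
    have hBunion : (⋃ i, B i) = Set.Ico (0:ℝ) 1 := by
      ext x
      simp only [Set.mem_iUnion, hB, Set.mem_Ico]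
      constructor
      · rintro ⟨i, h1', h2'⟩
        exact ⟨le_trans (hz0 ▸ hz.monotone (Nat.zero_le i)) h1', lt_trans h2' (hzlt (i+1))⟩
      · rintro ⟨hx0, hx1⟩
        have hex : ∃ n, x < z n := by
          have := hzlim.eventually (eventually_gt_nhds hx1)
          exact this.exists
        have hN0 : Nat.find hex ≠ 0 := by
          intro h
          have := Nat.find_spec hex
          rw [h, hz0] at this
          linarith
        obtain ⟨m, hm⟩ := Nat.exists_eq_succ_of_ne_zero hN0
        refine ⟨m, ?_, ?_⟩
        · by_contra hcon
          push_neg at hcon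
          exact Nat.find_min hex (by omega) hcon
        · have := Nat.find_spec hex
          rwa [hm] at this
    have h2 : μ S = ∑' i, μ (S ∩ B i) := by
      conv_lhs => rw [← measure_inter_conull (s := S) hsupp, ← hBunion]
      rw [Set.inter_iUnion,
        measure_iUnion hBdisj (fun i => hSmeas.inter (hBmeas i))]
    have h3 : S ∩ B 0 = Yset (j+1) := by
      have hYj1 : Yset (j+1) = Set.Ico ((2:ℝ)^(-(j:ℤ)-2)) ((2:ℝ)^(-(j:ℤ)-1)) := by
        unfold Yset
        rw [show (-((j+1 : ℕ):ℤ) - 1) = -(j:ℤ)-2 by push_cast; ring,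
          show (-((j+1 : ℕ):ℤ)) = -(j:ℤ)-1 by push_cast; ring]
      have hhalf : (2:ℝ)^(-(j:ℤ)-1) ≤ 1/2 := by
        have : (2:ℝ)^(-(j:ℤ)-1) ≤ 2^(-1:ℤ) := zpow_le_zpow_right₀ one_le_two (by omega)
        simpa using this
      ext x
      simp only [Set.mem_inter_iff, hS, Set.mem_preimage, hB, hz0, hz1, Set.mem_Ico, hYj1]
      unfold Yset
      constructor
      · rintro ⟨hxS, hx0, hx1⟩
        rw [hT0 x ⟨hx0, hx1⟩] at hxS
        simp only [Set.mem_Ico] at hxS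
        constructor
        · nlinarith [hxS.1, e2]
        · nlinarith [hxS.2, e1]
      · rintro ⟨hxl, hxr⟩
        have hx0 : 0 ≤ x := le_trans (hpow_pos _).le hxl
        have hx1 : x < 1/2 := lt_of_lt_of_le hxr hhalf
        refine ⟨?_, hx0, hx1⟩
        rw [hT0 x ⟨hx0, hx1⟩]
        simp only [Set.mem_Ico]
        constructor
        · nlinarith [e2]
        · nlinarith [e1]
    set g : ℕ → ℝ≥0∞ := fun i =>
      if j < i then η 0 * ENNReal.ofReal ((2:ℝ)^(-(j:ℤ)-1) * (slopeZ z i)⁻¹) else 0 with hg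
    have h4 : ∀ k : ℕ, μ (S ∩ B (k+1)) = g (k+1) := by
      intro k
      have hi : 1 ≤ k + 1 := Nat.succ_le_succ (Nat.zero_le k)
      set i := k + 1 with hidef
      have hsi : 0 < slopeZ z i := hspos i hi
      have hzi : z i < z (i+1) := hz (Nat.lt_succ_self i)
      have hz1i : (1:ℝ)/2 ≤ z i := hz1 ▸ hz.monotone hi
      have hsub0 : Set.Ioo (z i) (z (i+1)) ⊆ Yset 0 := by
        rw [hY0eq]
        intro x hx
        exact ⟨le_trans hz1i hx.1.le, lt_trans hx.2 (hzlt (i+1))⟩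
      have hIoo : ∀ x ∈ Set.Ioo (z i) (z (i+1)), (x ∈ S ↔
          (1 - (2:ℝ)^(-(j:ℤ)) < slopeZ z i * (x - z i) ∧
            slopeZ z i * (x - z i) ≤ 1 - (2:ℝ)^(-(j:ℤ)-1))) := by
        intro x hx
        rw [hS, Set.mem_preimage, hTj i hi x hx]
        unfold Yset
        simp only [Set.mem_Ico]
        constructor
        · rintro ⟨ha, hb⟩; exact ⟨by linarith, by linarith⟩
        · rintro ⟨ha, hb⟩; exact ⟨by linarith, by linarith⟩
      have hsplit : S ∩ B i ⊆ {z i} ∪ (S ∩ Set.Ioo (z i) (z (i+1))) := by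
        rintro x ⟨hxS, hxB⟩
        rcases eq_or_lt_of_le hxB.1 with h | h
        · exact Or.inl (by simp [← h])
        · exact Or.inr ⟨hxS, h, hxB.2⟩
      by_cases hij : j < i
      · have hjle : (2:ℝ)^(-(i:ℤ)) ≤ 2^(-(j:ℤ)-1) :=
          zpow_le_zpow_right₀ one_le_two (by omega)
        have hhalf : (2:ℝ)^(-(j:ℤ)-1) < 2^(-(j:ℤ)) :=
          zpow_lt_zpow_right₀ one_lt_two (by omega)
        set a := z i + (1 - (2:ℝ)^(-(j:ℤ))) / slopeZ z i with hadef
        set b := z i + (1 - (2:ℝ)^(-(j:ℤ)-1)) / slopeZ z i with hbdef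
        have hza : z i ≤ a :=
          le_add_of_nonneg_right (div_nonneg (by linarith) hsi.le)
        have hbz : b ≤ z (i+1) := by
          have hkey := hkey_s i
          have : (1 - (2:ℝ)^(-(j:ℤ)-1)) / slopeZ z i ≤ z (i+1) - z i := by
            rw [div_le_iff₀ hsi]
            linarith [hkey]
          rw [hbdef]; linarith
        have hba : b - a = (2:ℝ)^(-(j:ℤ)-1) * (slopeZ z i)⁻¹ := by
          have h' : b - a = ((1 - (2:ℝ)^(-(j:ℤ)-1)) - (1 - 2^(-(j:ℤ)))) / slopeZ z i := by
            rw [hbdef, hadef]; ring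
          rw [h', show ((1 - (2:ℝ)^(-(j:ℤ)-1)) - (1 - 2^(-(j:ℤ)))) = 2^(-(j:ℤ)-1) by
            linarith [e1], div_eq_mul_inv]
        have hsub1 : Set.Ioo a b ⊆ S ∩ Set.Ioo (z i) (z (i+1)) := by
          intro x hx
          have hxI : x ∈ Set.Ioo (z i) (z (i+1)) :=
            ⟨lt_of_le_of_lt hza hx.1, lt_of_lt_of_le hx.2 hbz⟩
          refine ⟨(hIoo x hxI).2 ⟨?_, ?_⟩, hxI⟩
          · have h' : (1 - (2:ℝ)^(-(j:ℤ))) / slopeZ z i < x - z i := by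
              have := hx.1; rw [hadef] at this; linarith
            have := (div_lt_iff₀ hsi).mp h'
            linarith
          · have h' : x - z i < (1 - (2:ℝ)^(-(j:ℤ)-1)) / slopeZ z i := by
              have := hx.2; rw [hbdef] at this; linarith
            have := (lt_div_iff₀ hsi).mp h'
            linarith
        have hsub2 : S ∩ Set.Ioo (z i) (z (i+1)) ⊆ Set.Ioc a b := by
          rintro x ⟨hxS, hxI⟩
          obtain ⟨hh1, hh2⟩ := (hIoo x hxI).1 hxS
          constructor
          · rw [hadef]
            have : (1 - (2:ℝ)^(-(j:ℤ))) / slopeZ z i < x - z i :=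
              (div_lt_iff₀ hsi).mpr (by linarith)
            linarith
          · rw [hbdef]
            have : x - z i ≤ (1 - (2:ℝ)^(-(j:ℤ)-1)) / slopeZ z i :=
              (le_div_iff₀ hsi).mpr (by linarith)
            linarith
        have hvol : volume (S ∩ Set.Ioo (z i) (z (i+1))) =
            ENNReal.ofReal ((2:ℝ)^(-(j:ℤ)-1) * (slopeZ z i)⁻¹) := by
          apply le_antisymm
          · calc volume (S ∩ Set.Ioo (z i) (z (i+1))) ≤ volume (Set.Ioc a b) :=
                measure_mono hsub2
              _ = ENNReal.ofReal (b - a) := Real.volume_Ioc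
              _ = _ := by rw [hba]
          · calc ENNReal.ofReal ((2:ℝ)^(-(j:ℤ)-1) * (slopeZ z i)⁻¹)
                = ENNReal.ofReal (b - a) := by rw [hba]
              _ = volume (Set.Ioo a b) := Real.volume_Ioo.symm
              _ ≤ _ := measure_mono hsub1
        have hμIoo : μ (S ∩ Set.Ioo (z i) (z (i+1))) =
            η 0 * ENNReal.ofReal ((2:ℝ)^(-(j:ℤ)-1) * (slopeZ z i)⁻¹) := by
          rw [hdens 0 _ (fun x hx => hsub0 hx.2) (hSmeas.inter measurableSet_Ioo), hvol]
        have hfin : μ (S ∩ B i) = μ (S ∩ Set.Ioo (z i) (z (i+1))) := by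
          apply le_antisymm
          · calc μ (S ∩ B i) ≤ μ ({z i} ∪ (S ∩ Set.Ioo (z i) (z (i+1)))) :=
                measure_mono hsplit
              _ ≤ μ {z i} + μ (S ∩ Set.Ioo (z i) (z (i+1))) := measure_union_le _ _
              _ = μ (S ∩ Set.Ioo (z i) (z (i+1))) := by rw [hμpt]; exact zero_add _
          · exact measure_mono (Set.inter_subset_inter_right S Set.Ioo_subset_Ico_self)
        rw [hfin, hμIoo, hg]
        simp only [hij, if_true]
      · have hile : (2:ℝ)^(-(j:ℤ)) ≤ 2^(-(i:ℤ)) :=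
          zpow_le_zpow_right₀ one_le_two (by omega)
        have hempty : S ∩ Set.Ioo (z i) (z (i+1)) = ∅ := by
          ext x
          simp only [Set.mem_inter_iff, Set.mem_empty_iff_false, iff_false, not_and]
          intro hxS hxI
          obtain ⟨hh1, hh2⟩ := (hIoo x hxI).1 hxS
          have hkey := hkey_s i
          have hx2 : slopeZ z i * (x - z i) < slopeZ z i * (z (i+1) - z i) :=
            mul_lt_mul_of_pos_left (by linarith [hxI.2]) hsi
          linarith
        have hz0' : μ (S ∩ B i) = 0 := by
          apply le_antisymm _ zero_le
          calc μ (S ∩ B i) ≤ μ ({z i} ∪ (S ∩ Set.Ioo (z i) (z (i+1)))) :=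
              measure_mono hsplit
            _ ≤ μ {z i} + μ (S ∩ Set.Ioo (z i) (z (i+1))) := measure_union_le _ _
            _ = 0 := by rw [hμpt, hempty, measure_empty, add_zero]
        rw [hz0', hg]
        simp only [hij, if_false]
    have hg0 : g 0 = 0 := by simp [hg]
    have hsum : ∑' i, μ (S ∩ B i) = μ (Yset (j+1)) + ∑' i, g i := by
      rw [tsum_eq_zero_add' ENNReal.summable, h3]
      congr 1
      have : ∀ k, μ (S ∩ B (k+1)) = g (k+1) := h4
      rw [tsum_congr this]
      exact Function.Injective.tsum_eq (Nat.succ_injective)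
        (fun x hx => by
          rcases Nat.eq_zero_or_pos x with h | h
          · exact absurd (h ▸ hx) (by simp [hg0])
          · exact ⟨x - 1, by omega⟩)
    have hgsum : ∑' i, g i = sigmaY z μ j := by
      have hc : ∀ i, g i = (η 0 * ENNReal.ofReal ((2:ℝ)^(-(j:ℤ)-1))) *
          (if j < i then ENNReal.ofReal ((slopeZ z i)⁻¹) else 0) := by
        intro i
        by_cases h : j < i
        · simp only [hg, h, if_true,
            ENNReal.ofReal_mul (le_of_lt (hpow_pos (-(j:ℤ)-1))), mul_assoc]
        · simp [hg, h]
      rw [tsum_congr hc, ENNReal.tsum_mul_left]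
      unfold sigmaY
      rw [hη0]
    rw [h1, h2, hsum, hgsum]
  refine ⟨key, ?_⟩
  -- second part
  have hYd : ∀ n m : ℕ, n < m → Disjoint (Yset n) (Yset m) := by
    intro n m hnm
    unfold Yset
    rw [Set.Ico_disjoint_Ico]
    have h1 : (2:ℝ)^(-(m:ℤ)) ≤ 2^(-(n:ℤ)-1) := zpow_le_zpow_right₀ one_le_two (by omega)
    exact le_trans (min_le_right _ _) (le_trans h1 (le_max_left _ _))
  have hYpair : Pairwise (Function.onFun Disjoint Yset) := by
    intro n m h
    rcases h.lt_or_gt with h' | h'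
    · exact hYd n m h'
    · exact (hYd m n h').symm
  have htne : ∑' n, μ (Yset n) ≠ ⊤ := by
    rw [← measure_iUnion hYpair hYmeas]
    exact (measure_lt_top μ _).ne
  have hY0lim : Tendsto (fun n => μ (Yset n)) atTop (𝓝 0) :=
    ENNReal.tendsto_atTop_zero_of_tsum_ne_top htne
  intro j
  have hind : ∀ n : ℕ, μ (Yset j) =
      μ (Yset (j+n)) + ∑ k ∈ Finset.range n, sigmaY z μ (j+k) := by
    intro n
    induction n with
    | zero => simp
    | succ n ih =>
      rw [ih, key (j+n), Finset.sum_range_succ, ← add_assoc,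
        add_comm (μ (Yset (j+n+1))) (sigmaY z μ (j+n)), add_assoc, add_comm (sigmaY z μ (j+n)),
        ← add_assoc]
  have hlim1 : Tendsto (fun n => μ (Yset (j+n))) atTop (𝓝 0) :=
    hY0lim.comp ((tendsto_add_atTop_nat j).congr (fun n => add_comm n j))
  have hlim2 : Tendsto (fun n => ∑ k ∈ Finset.range n, sigmaY z μ (j+k)) atTop
      (𝓝 (∑' k, sigmaY z μ (j+k))) := ENNReal.tendsto_nat_tsum _
  have htot : Tendsto (fun n => μ (Yset (j+n)) + ∑ k ∈ Finset.range n, sigmaY z μ (j+k))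
      atTop (𝓝 (0 + ∑' k, sigmaY z μ (j+k))) := hlim1.add hlim2
  have heq : μ (Yset j) = ∑' k, sigmaY z μ (j+k) := by
    have hconst : Tendsto (fun _ : ℕ => μ (Yset j)) atTop (𝓝 (μ (Yset j))) :=
      tendsto_const_nhds
    have := tendsto_nhds_unique (htot.congr (fun n => (hind n).symm)) hconst
    rw [← this, zero_add]
  rw [heq]
  have h' := Function.Injective.tsum_eq (g := fun k : ℕ => k + j) (add_left_injective j)
    (f := fun i : ℕ => if j ≤ i then sigmaY z μ i else 0)
    (by
      intro x hx
      have hjx : j ≤ x := by by_contra h; exact hx (by simp [h])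
      exact ⟨x - j, by simpa using Nat.sub_add_cancel hjx⟩)
  have h'' : ∑' c : ℕ, (if j ≤ c + j then sigmaY z μ (c + j) else 0) =
      ∑' i : ℕ, (if j ≤ i then sigmaY z μ i else 0) := by simpa using h'
  rw [← h'']
  apply tsum_congr
  intro k
  rw [if_pos (Nat.le_add_left j k), Nat.add_comm j k]
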